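/- There exists K > 0 with the following property. Let z⁺ be the optimal value (+∞ if infeasible) of: minimize Σ_{q=1}^Q |ε_q − 1| over (c, y, ε_1, …, ε_Q) subject to Aᵀ y = c, y ≥ 0, cᵀ x̂_q = ε_q for all q, bᵀ y = 1, and ‖c‖' ≥ K. Let z⁻ be the optimal value (+∞ if infeasible) of the analogous problem with cᵀ x̂_q = −ε_q for all q and bᵀ y = −1. Let z⁰ = 0 if there exist (c, y) with Aᵀ y = c, y ≥ 0, cᵀ x̂_q = 0 for all q, bᵀ y = 0, yᵀ 1 = 1, and ‖c‖' ≥ K, and z⁰ = +∞ otherwise (with ε_q := 1 for all q in this sub-problem). Then the optimal value of GIO_R(X̂) equals min{z⁺, z⁻, z⁰}, and if (c*, y*, ε_1*, …, ε_Q*) is an optimal solution of a sub-problem attaining this minimum, then (c*/‖c*‖', y*/‖c*‖', ε_1*, …, ε_Q*) is an optimal solution of GIO_R(X̂). -/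

import Mathlib

open Matrix
open scoped ENNReal

/-- Feasibility for the relative duality gap inverse problem `GIO_R(X̂)`,
including the convention that `bᵀ y = 0` forces `ε_q = 1` for all `q`. -/
def FeasR {m n Q : ℕ} (A : Matrix (Fin m) (Fin n) ℝ) (b : Fin m → ℝ)
    (N : (Fin n → ℝ) → ℝ) (xhat : Fin Q → Fin n → ℝ)
    (c : Fin n → ℝ) (y : Fin m → ℝ) (ε : Fin Q → ℝ) : Prop :=
  Aᵀ.mulVec y = c ∧ (∀ i, 0 ≤ y i) ∧ (∀ q, c ⬝ᵥ xhat q = ε q * (b ⬝ᵥ y)) ∧ N c = 1 ∧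
    (b ⬝ᵥ y = 0 → ∀ q, ε q = 1)

/-- Feasibility for the sub-problem `GIO_R⁺(X̂; K)`. -/
def FeasP {m n Q : ℕ} (A : Matrix (Fin m) (Fin n) ℝ) (b : Fin m → ℝ)
    (N : (Fin n → ℝ) → ℝ) (xhat : Fin Q → Fin n → ℝ) (K : ℝ)
    (c : Fin n → ℝ) (y : Fin m → ℝ) (ε : Fin Q → ℝ) : Prop :=
  Aᵀ.mulVec y = c ∧ (∀ i, 0 ≤ y i) ∧ (∀ q, c ⬝ᵥ xhat q = ε q) ∧ b ⬝ᵥ y = 1 ∧ K ≤ N c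

/-- Feasibility for the sub-problem `GIO_R⁻(X̂; K)`. -/
def FeasNg {m n Q : ℕ} (A : Matrix (Fin m) (Fin n) ℝ) (b : Fin m → ℝ)
    (N : (Fin n → ℝ) → ℝ) (xhat : Fin Q → Fin n → ℝ) (K : ℝ)
    (c : Fin n → ℝ) (y : Fin m → ℝ) (ε : Fin Q → ℝ) : Prop :=
  Aᵀ.mulVec y = c ∧ (∀ i, 0 ≤ y i) ∧ (∀ q, c ⬝ᵥ xhat q = -(ε q)) ∧ b ⬝ᵥ y = -1 ∧ K ≤ N c

/-- Feasibility for the sub-problem `GIO_R⁰(X̂; K)`. -/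
def FeasZ {m n Q : ℕ} (A : Matrix (Fin m) (Fin n) ℝ) (b : Fin m → ℝ)
    (N : (Fin n → ℝ) → ℝ) (xhat : Fin Q → Fin n → ℝ) (K : ℝ)
    (c : Fin n → ℝ) (y : Fin m → ℝ) : Prop :=
  Aᵀ.mulVec y = c ∧ (∀ i, 0 ≤ y i) ∧ (∀ q, c ⬝ᵥ xhat q = 0) ∧ b ⬝ᵥ y = 0 ∧
    (∑ i, y i) = 1 ∧ K ≤ N c

/-- Optimal value (in `ℝ≥0∞`, `+∞` if infeasible) of `GIO_R⁺(X̂; K)`. -/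
noncomputable def zP {m n Q : ℕ} (A : Matrix (Fin m) (Fin n) ℝ) (b : Fin m → ℝ)
    (N : (Fin n → ℝ) → ℝ) (xhat : Fin Q → Fin n → ℝ) (K : ℝ) : ℝ≥0∞ :=
  sInf {v : ℝ≥0∞ | ∃ (c : Fin n → ℝ) (y : Fin m → ℝ) (ε : Fin Q → ℝ),
    FeasP A b N xhat K c y ε ∧ v = ENNReal.ofReal (∑ q, |ε q - 1|)}

/-- Optimal value (in `ℝ≥0∞`, `+∞` if infeasible) of `GIO_R⁻(X̂; K)`. -/
noncomputable def zN {m n Q : ℕ} (A : Matrix (Fin m) (Fin n) ℝ) (b : Fin m → ℝ)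
    (N : (Fin n → ℝ) → ℝ) (xhat : Fin Q → Fin n → ℝ) (K : ℝ) : ℝ≥0∞ :=
  sInf {v : ℝ≥0∞ | ∃ (c : Fin n → ℝ) (y : Fin m → ℝ) (ε : Fin Q → ℝ),
    FeasNg A b N xhat K c y ε ∧ v = ENNReal.ofReal (∑ q, |ε q - 1|)}

/-- Optimal value (in `ℝ≥0∞`; `0` if feasible and `+∞` otherwise) of
`GIO_R⁰(X̂; K)`. -/
noncomputable def zZ {m n Q : ℕ} (A : Matrix (Fin m) (Fin n) ℝ) (b : Fin m → ℝ)
    (N : (Fin n → ℝ) → ℝ) (xhat : Fin Q → Fin n → ℝ) (K : ℝ) : ℝ≥0∞ :=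
  sInf {v : ℝ≥0∞ | ∃ (c : Fin n → ℝ) (y : Fin m → ℝ),
    FeasZ A b N xhat K c y ∧ v = 0}


section helpers
variable {n : ℕ} (N : (Fin n → ℝ) → ℝ)

lemma N_zero (hN₂ : ∀ (a : ℝ) (x : Fin n → ℝ), N (a • x) = |a| * N x) : N 0 = 0 := by
  have := hN₂ 0 0; simpa using this

lemma N_nonneg (hN₁ : ∀ x y, N (x + y) ≤ N x + N y)
    (hN₂ : ∀ (a : ℝ) (x : Fin n → ℝ), N (a • x) = |a| * N x) (x : Fin n → ℝ) : 0 ≤ N x := by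
  have h0 : N 0 = 0 := N_zero N hN₂
  have hneg : N (-x) = N x := by
    have := hN₂ (-1) x; simpa using this
  have := hN₁ x (-x)
  simp [h0, hneg] at this
  linarith

lemma N_sum (hN₁ : ∀ x y, N (x + y) ≤ N x + N y)
    (hN₂ : ∀ (a : ℝ) (x : Fin n → ℝ), N (a • x) = |a| * N x)
    {ι : Type*} (s : Finset ι) (f : ι → (Fin n → ℝ)) :
    N (∑ j ∈ s, f j) ≤ ∑ j ∈ s, N (f j) := by
  classical
  induction s using Finset.cons_induction with
  | empty => simp [N_zero N hN₂]
  | cons a s ha ih =>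
      rw [Finset.sum_cons, Finset.sum_cons]
      exact (hN₁ _ _).trans (by linarith)

lemma N_le_norm (hN₁ : ∀ x y, N (x + y) ≤ N x + N y)
    (hN₂ : ∀ (a : ℝ) (x : Fin n → ℝ), N (a • x) = |a| * N x) :
    ∃ M : ℝ, 0 ≤ M ∧ ∀ z, N z ≤ M * ‖z‖ := by
  refine ⟨∑ j, N (Pi.single j 1), Finset.sum_nonneg fun j _ => N_nonneg N hN₁ hN₂ _, fun z => ?_⟩
  have hz : z = ∑ j, Pi.single j (z j) := by
    simp [Finset.univ_sum_single]
  calc N z = N (∑ j, Pi.single j (z j)) := by rw [← hz]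
    _ ≤ ∑ j, N (Pi.single j (z j)) := N_sum N hN₁ hN₂ _ _
    _ ≤ ∑ j, ‖z‖ * N (Pi.single j 1) := by
        apply Finset.sum_le_sum
        intro j _
        have : Pi.single j (z j) = (z j) • (Pi.single j (1:ℝ) : Fin n → ℝ) := by
          rw [← Pi.single_smul]; simp
        rw [this, hN₂]
        have h1 : |z j| ≤ ‖z‖ := by simpa using norm_le_pi_norm z j
        exact mul_le_mul_of_nonneg_right h1 (N_nonneg N hN₁ hN₂ _)
    _ = (∑ j, N (Pi.single j 1)) * ‖z‖ := by rw [Finset.sum_mul]; exact Finset.sum_congr rfl fun j _ => mul_comm _ _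

lemma N_continuous (hN₁ : ∀ x y, N (x + y) ≤ N x + N y)
    (hN₂ : ∀ (a : ℝ) (x : Fin n → ℝ), N (a • x) = |a| * N x) : Continuous N := by
  obtain ⟨M, hM0, hM⟩ := N_le_norm N hN₁ hN₂
  have key : ∀ x y : Fin n → ℝ, N x - N y ≤ M * ‖x - y‖ := by
    intro x y
    have h1 : N x ≤ N y + N (x - y) := by
      have := hN₁ y (x - y); simpa using this
    have := hM (x - y); linarith
  have : LipschitzWith M.toNNReal N := by
    apply LipschitzWith.of_dist_le_mul
    intro x y
    rw [Real.dist_eq, Real.coe_toNNReal M hM0, dist_eq_norm]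
    rw [abs_sub_le_iff]
    constructor
    · exact key x y
    · have := key y x; rwa [norm_sub_rev] at this
  exact this.continuous

lemma exists_alpha (hn : 0 < n)
    (hN₁ : ∀ x y, N (x + y) ≤ N x + N y)
    (hN₂ : ∀ (a : ℝ) (x : Fin n → ℝ), N (a • x) = |a| * N x)
    (hN₃ : ∀ x, x ≠ 0 → 0 < N x) :
    ∃ α : ℝ, 0 < α ∧ ∀ c, α * ‖c‖ ≤ N c := by
  haveI : Nonempty (Fin n) := ⟨⟨0, hn⟩⟩
  have hsne : (Metric.sphere (0 : Fin n → ℝ) 1).Nonempty :=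
    NormedSpace.sphere_nonempty.mpr zero_le_one
  obtain ⟨c₀, hc₀mem, hc₀min⟩ := (isCompact_sphere (0 : Fin n → ℝ) 1).exists_isMinOn hsne
    (N_continuous N hN₁ hN₂).continuousOn
  have hc₀norm : ‖c₀‖ = 1 := by simpa using hc₀mem
  have hc₀ne : c₀ ≠ 0 := by
    intro h; rw [h] at hc₀norm; simp at hc₀norm
  refine ⟨N c₀, hN₃ c₀ hc₀ne, fun c => ?_⟩
  rcases eq_or_ne c 0 with rfl | hc
  · simp [N_zero N hN₂]
  · have hcn : (0:ℝ) < ‖c‖ := norm_pos_iff.mpr hc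
    have hu : ‖c‖⁻¹ • c ∈ Metric.sphere (0 : Fin n → ℝ) 1 := by
      simp [norm_smul, abs_of_pos (inv_pos.mpr hcn), inv_mul_cancel₀ hcn.ne']
    have h1 : N c₀ ≤ N (‖c‖⁻¹ • c) := hc₀min hu
    rw [hN₂, abs_of_pos (inv_pos.mpr hcn)] at h1
    calc N c₀ * ‖c‖ ≤ (‖c‖⁻¹ * N c) * ‖c‖ :=
          mul_le_mul_of_nonneg_right h1 hcn.le
      _ = N c := by field_simp
end helpers



lemma exists_slack {m n : ℕ} (hm : 0 < m) (A : Matrix (Fin m) (Fin n) ℝ) (b : Fin m → ℝ)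
    (hrows : ∀ i, A i ≠ 0)
    (hPint : (interior {x : Fin n → ℝ | ∀ i, b i ≤ A.mulVec x i}).Nonempty) :
    ∃ (x₀ : Fin n → ℝ) (δ : ℝ), 0 < δ ∧ ∀ i, b i + δ ≤ A.mulVec x₀ i := by
  obtain ⟨x₀, hx₀⟩ := hPint
  have hstrict : ∀ i, b i < A.mulVec x₀ i := by
    intro i
    obtain ⟨ε, hε0, hball⟩ := Metric.mem_nhds_iff.mp (mem_interior_iff_mem_nhds.mp hx₀)
    set w : Fin n → ℝ := A i with hw
    have hww : 0 < w ⬝ᵥ w := by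
      rcases (dotProduct_self_eq_zero (v := w)).not.mpr (hrows i) with h
      have : 0 ≤ w ⬝ᵥ w := Finset.sum_nonneg fun j _ => mul_self_nonneg _
      cases this.lt_or_eq with
      | inl h' => exact h'
      | inr h' => exact absurd h'.symm h
    set t : ℝ := ε / (2 * (‖w‖ + 1)) with ht
    have hwn : (0:ℝ) < ‖w‖ + 1 := by positivity
    have ht0 : 0 < t := by positivity
    have hmem : x₀ - t • w ∈ Metric.ball x₀ ε := by
      rw [Metric.mem_ball, dist_eq_norm]
      have : x₀ - t • w - x₀ = -(t • w) := by abel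
      rw [this, norm_neg, norm_smul, Real.norm_eq_abs, abs_of_pos ht0]
      calc t * ‖w‖ ≤ t * (‖w‖ + 1) := by nlinarith [ht0.le]
        _ = ε / 2 := by rw [ht, div_mul_eq_mul_div, mul_div_mul_right _ _ hwn.ne']
        _ < ε := by linarith
    have hx' := hball hmem
    have : b i ≤ A.mulVec (x₀ - t • w) i := hx' i
    rw [Matrix.mulVec_sub, Matrix.mulVec_smul] at this
    have hApp : A.mulVec w i = w ⬝ᵥ w := rfl
    simp only [Pi.sub_apply, Pi.smul_apply, smul_eq_mul, hApp] at this
    nlinarith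
  haveI : Nonempty (Fin m) := ⟨⟨0, hm⟩⟩
  refine ⟨x₀, Finset.univ.inf' Finset.univ_nonempty (fun i => A.mulVec x₀ i - b i), ?_, ?_⟩
  · rw [Finset.lt_inf'_iff]
    intro i _
    linarith [hstrict i]
  · intro i
    have := Finset.inf'_le (f := fun i => A.mulVec x₀ i - b i) (Finset.mem_univ i)
    linarith

lemma key_ineq {m n : ℕ} (A : Matrix (Fin m) (Fin n) ℝ) (b : Fin m → ℝ)
    (x₀ : Fin n → ℝ) (δ : ℝ) (hδ : ∀ i, b i + δ ≤ A.mulVec x₀ i)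
    (y : Fin m → ℝ) (hy : ∀ i, 0 ≤ y i) :
    b ⬝ᵥ y + δ * ∑ i, y i ≤ Aᵀ.mulVec y ⬝ᵥ x₀ := by
  rw [Matrix.mulVec_transpose, ← Matrix.dotProduct_mulVec]
  calc b ⬝ᵥ y + δ * ∑ i, y i = ∑ i, y i * (b i + δ) := by
        rw [dotProduct, Finset.mul_sum, ← Finset.sum_add_distrib]
        exact Finset.sum_congr rfl fun i _ => by ring
    _ ≤ ∑ i, y i * A.mulVec x₀ i :=
        Finset.sum_le_sum fun i _ => mul_le_mul_of_nonneg_left (hδ i) (hy i)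
    _ = y ⬝ᵥ A.mulVec x₀ := rfl



lemma exists_mu {m n : ℕ} (hm : 0 < m) (A : Matrix (Fin m) (Fin n) ℝ)
    (N : (Fin n → ℝ) → ℝ) (hNc : Continuous N)
    (hN₂ : ∀ (a : ℝ) (x : Fin n → ℝ), N (a • x) = |a| * N x)
    (hN₃ : ∀ x, x ≠ 0 → 0 < N x)
    (hnoray : ∀ y : Fin m → ℝ, (∀ i, 0 ≤ y i) → Aᵀ.mulVec y = 0 → y = 0) :
    ∃ μ : ℝ, 0 < μ ∧ ∀ y : Fin m → ℝ, (∀ i, 0 ≤ y i) →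
      μ * ∑ i, y i ≤ N (Aᵀ.mulVec y) := by
  set Δ : Set (Fin m → ℝ) := {y | (∀ i, 0 ≤ y i) ∧ ∑ i, y i = 1} with hΔ
  have hclosed : IsClosed Δ := by
    have : Δ = (⋂ i, {y : Fin m → ℝ | 0 ≤ y i}) ∩ {y : Fin m → ℝ | ∑ i, y i = 1} := by
      ext y; simp [hΔ, Set.mem_iInter]
    rw [this]
    exact (isClosed_iInter fun i => isClosed_le continuous_const (continuous_apply i)).inter
      (isClosed_eq (continuous_finset_sum _ fun i _ => continuous_apply i) continuous_const)
  have hsub : Δ ⊆ Metric.closedBall 0 1 := by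
    intro y hy
    rw [Metric.mem_closedBall, dist_zero_right]
    rw [pi_norm_le_iff_of_nonneg zero_le_one]
    intro i
    rw [Real.norm_eq_abs, abs_of_nonneg (hy.1 i)]
    calc y i ≤ ∑ j, y j := Finset.single_le_sum (fun j _ => hy.1 j) (Finset.mem_univ i)
      _ = 1 := hy.2
  have hcompact : IsCompact Δ := (isCompact_closedBall 0 1).of_isClosed_subset hclosed hsub
  have hne : Δ.Nonempty := by
    refine ⟨fun _ => (m : ℝ)⁻¹, fun i => by positivity, ?_⟩
    rw [Finset.sum_const, Finset.card_univ, Fintype.card_fin, nsmul_eq_mul]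
    field_simp
  have hcont : Continuous fun y : Fin m → ℝ => N (Aᵀ.mulVec y) := by
    apply hNc.comp
    apply continuous_pi
    intro j
    have : (fun y : Fin m → ℝ => Aᵀ.mulVec y j) = fun y => ∑ i, A i j * y i := by
      funext y; simp [Matrix.mulVec, dotProduct, Matrix.transpose_apply]
    rw [this]
    exact continuous_finset_sum _ fun i _ => continuous_const.mul (continuous_apply i)
  obtain ⟨y₀, hy₀Δ, hy₀min⟩ := hcompact.exists_isMinOn hne hcont.continuousOn
  have hy₀ne : y₀ ≠ 0 := by
    intro h
    have := hy₀Δ.2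
    rw [h] at this; simp at this
  have hAy₀ : Aᵀ.mulVec y₀ ≠ 0 := fun h => hy₀ne (hnoray y₀ hy₀Δ.1 h)
  refine ⟨N (Aᵀ.mulVec y₀), hN₃ _ hAy₀, fun y hy => ?_⟩
  rcases eq_or_lt_of_le (Finset.sum_nonneg (s := Finset.univ) fun i _ => hy i) with h0 | hpos
  · have hy0 : y = 0 := by
      funext i
      have := (Finset.sum_eq_zero_iff_of_nonneg (fun j _ => hy j)).mp h0.symm i (Finset.mem_univ i)
      simpa using this
    simp [hy0, N_zero N hN₂]
  · set S := ∑ i, y i with hS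
    have hmem : S⁻¹ • y ∈ Δ := by
      constructor
      · intro i; exact mul_nonneg (inv_nonneg.mpr hpos.le) (hy i)
      · simp only [Pi.smul_apply, smul_eq_mul, ← Finset.mul_sum]
        field_simp; exact hS.symm
    have h1 : N (Aᵀ.mulVec y₀) ≤ N (Aᵀ.mulVec (S⁻¹ • y)) := hy₀min hmem
    have h2 : N (Aᵀ.mulVec (S⁻¹ • y)) = S⁻¹ * N (Aᵀ.mulVec y) := by
      rw [Matrix.mulVec_smul, hN₂, abs_of_pos (inv_pos.mpr hpos)]
    rw [h2] at h1
    have h3 := mul_le_mul_of_nonneg_right h1 hpos.le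
    have h4 : S⁻¹ * N (Aᵀ.mulVec y) * S = N (Aᵀ.mulVec y) := by
      field_simp
    rw [h4] at h3
    exact h3


section norms
variable {m n Q : ℕ} {A : Matrix (Fin m) (Fin n) ℝ} {b : Fin m → ℝ}
  {N : (Fin n → ℝ) → ℝ} {xhat : Fin Q → Fin n → ℝ} {K : ℝ}

lemma normP (hN₂ : ∀ (a : ℝ) (x : Fin n → ℝ), N (a • x) = |a| * N x) (hK : 0 < K) {c y ε} (h : FeasP A b N xhat K c y ε) :
    FeasR A b N xhat ((N c)⁻¹ • c) ((N c)⁻¹ • y) ε := by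
  obtain ⟨h1, h2, h3, h4, h5⟩ := h
  have hNc : 0 < N c := lt_of_lt_of_le hK h5
  have hby : b ⬝ᵥ ((N c)⁻¹ • y) = (N c)⁻¹ := by
    rw [dotProduct_smul, h4]; simp
  refine ⟨?_, fun i => mul_nonneg (inv_nonneg.mpr hNc.le) (h2 i), fun q => ?_, ?_, ?_⟩
  · rw [Matrix.mulVec_smul, h1]
  · rw [smul_dotProduct, h3, hby]; simp [mul_comm]
  · rw [hN₂, abs_of_pos (inv_pos.mpr hNc)]; field_simp
  · rw [hby]; intro habs
    exact absurd habs (inv_ne_zero hNc.ne')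

lemma normN (hN₂ : ∀ (a : ℝ) (x : Fin n → ℝ), N (a • x) = |a| * N x) (hK : 0 < K) {c y ε} (h : FeasNg A b N xhat K c y ε) :
    FeasR A b N xhat ((N c)⁻¹ • c) ((N c)⁻¹ • y) ε := by
  obtain ⟨h1, h2, h3, h4, h5⟩ := h
  have hNc : 0 < N c := lt_of_lt_of_le hK h5
  have hby : b ⬝ᵥ ((N c)⁻¹ • y) = -(N c)⁻¹ := by
    rw [dotProduct_smul, h4]; simp
  refine ⟨?_, fun i => mul_nonneg (inv_nonneg.mpr hNc.le) (h2 i), fun q => ?_, ?_, ?_⟩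
  · rw [Matrix.mulVec_smul, h1]
  · rw [smul_dotProduct, h3, hby]; simp; ring
  · rw [hN₂, abs_of_pos (inv_pos.mpr hNc)]; field_simp
  · rw [hby]; intro habs
    exact absurd (neg_eq_zero.mp habs) (inv_ne_zero hNc.ne')

lemma normZ (hN₂ : ∀ (a : ℝ) (x : Fin n → ℝ), N (a • x) = |a| * N x) (hK : 0 < K) {c y} (ε : Fin Q → ℝ) (hε : ∀ q, ε q = 1) (h : FeasZ A b N xhat K c y) :
    FeasR A b N xhat ((N c)⁻¹ • c) ((N c)⁻¹ • y) ε := by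
  obtain ⟨h1, h2, h3, h4, _, h6⟩ := h
  have hNc : 0 < N c := lt_of_lt_of_le hK h6
  have hby : b ⬝ᵥ ((N c)⁻¹ • y) = 0 := by
    rw [dotProduct_smul, h4]; simp
  refine ⟨?_, fun i => mul_nonneg (inv_nonneg.mpr hNc.le) (h2 i), fun q => ?_, ?_, ?_⟩
  · rw [Matrix.mulVec_smul, h1]
  · rw [smul_dotProduct, h3, hby]; simp
  · rw [hN₂, abs_of_pos (inv_pos.mpr hNc)]; field_simp
  · intro _; exact hε
end norms


lemma zN_le_pad {m n Q : ℕ} (A : Matrix (Fin m) (Fin n) ℝ) (b : Fin m → ℝ)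
    (N : (Fin n → ℝ) → ℝ) (xhat : Fin Q → Fin n → ℝ) (K : ℝ)
    (hN₂ : ∀ (a : ℝ) (x : Fin n → ℝ), N (a • x) = |a| * N x)
    (r : Fin m → ℝ) (hr0 : ∀ i, 0 ≤ r i) (hrA : Aᵀ.mulVec r = 0) (hrb : b ⬝ᵥ r = -1)
    (y₀ : Fin m → ℝ) (hy₀ : ∀ i, 0 ≤ y₀ i) (τ : ℝ) (hτ : 0 < τ)
    (hpad : 0 ≤ 1 + τ * (b ⬝ᵥ y₀))
    (hKN : K ≤ τ * N (Aᵀ.mulVec y₀))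
    (hexact : ∀ q, τ * |Aᵀ.mulVec y₀ ⬝ᵥ xhat q| ≤ 1) :
    zN A b N xhat K ≤ ENNReal.ofReal (∑ q, (1 + τ * (Aᵀ.mulVec y₀ ⬝ᵥ xhat q))) := by
  set c₀ := Aᵀ.mulVec y₀ with hc₀
  apply sInf_le
  refine ⟨τ • c₀, τ • y₀ + (1 + τ * (b ⬝ᵥ y₀)) • r, fun q => -(τ * (c₀ ⬝ᵥ xhat q)),
    ⟨?_, ?_, ?_, ?_, ?_⟩, ?_⟩
  · rw [Matrix.mulVec_add, Matrix.mulVec_smul, Matrix.mulVec_smul, hrA, smul_zero, add_zero, hc₀]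
  · intro i
    exact add_nonneg (mul_nonneg hτ.le (hy₀ i)) (mul_nonneg hpad (hr0 i))
  · intro q
    rw [smul_dotProduct]
    simp [smul_eq_mul]
  · rw [dotProduct_add, dotProduct_smul, dotProduct_smul, hrb]
    simp only [smul_eq_mul]
    ring
  · rw [hN₂, abs_of_pos hτ]; exact hKN
  · congr 1
    apply Finset.sum_congr rfl
    intro q _
    have h1 : -(τ * (c₀ ⬝ᵥ xhat q)) - 1 = -(1 + τ * (c₀ ⬝ᵥ xhat q)) := by ring
    rw [h1, abs_neg, abs_of_nonneg]
    have := hexact q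
    have h2 : -(τ * |c₀ ⬝ᵥ xhat q|) ≤ τ * (c₀ ⬝ᵥ xhat q) := by
      rw [← mul_neg]
      exact mul_le_mul_of_nonneg_left (neg_abs_le _) hτ.le
    linarith

lemma obj_lower {Q : ℕ} (ε : Fin Q → ℝ) : (Q : ℝ) - ∑ q, ε q ≤ ∑ q, |ε q - 1| := by
  have h : ∀ q : Fin Q, 1 - ε q ≤ |ε q - 1| := fun q => by
    rw [abs_sub_comm]; exact le_abs_self _
  calc (Q : ℝ) - ∑ q, ε q = ∑ q : Fin Q, (1 - ε q) := by
        rw [Finset.sum_sub_distrib]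
        simp
    _ ≤ ∑ q, |ε q - 1| := Finset.sum_le_sum fun q _ => h q

lemma hCK_gen {n : ℕ} (x₀ : Fin n → ℝ) (N : (Fin n → ℝ) → ℝ) (K Cα δ : ℝ)
    (hK0 : 0 < K) (hCα : 0 < Cα) (hδ0 : 0 < δ)
    (hKa : K ≤ Cα⁻¹) (hKb : K ≤ δ / Cα)
    (hbound : ∀ c : Fin n → ℝ, N c = 1 → c ⬝ᵥ x₀ ≤ Cα) :
    ∀ c : Fin n → ℝ, N c = 1 → c ⬝ᵥ x₀ ≤ K⁻¹ ∧ c ⬝ᵥ x₀ ≤ δ * K⁻¹ := by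
  intro c hc
  have hb := hbound c hc
  have h1 : Cα ≤ K⁻¹ := by
    have := inv_anti₀ hK0 hKa
    rwa [inv_inv] at this
  have h3 : Cα ≤ δ * K⁻¹ := by
    have := inv_anti₀ hK0 hKb
    rw [inv_div] at this
    calc Cα = δ * (Cα / δ) := by field_simp
      _ ≤ δ * K⁻¹ := mul_le_mul_of_nonneg_left this hδ0.le
  exact ⟨hb.trans h1, hb.trans h3⟩


lemma core_cases {m n Q : ℕ} (A : Matrix (Fin m) (Fin n) ℝ) (b : Fin m → ℝ)
    (N : (Fin n → ℝ) → ℝ) (xhat : Fin Q → Fin n → ℝ) (K : ℝ)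
    (hN₂ : ∀ (a : ℝ) (x : Fin n → ℝ), N (a • x) = |a| * N x)
    (hK0 : 0 < K)
    (x₀ : Fin n → ℝ) (δ : ℝ) (hδ0 : 0 < δ) (hδ : ∀ i, b i + δ ≤ A.mulVec x₀ i)
    (hCK : ∀ c : Fin n → ℝ, N c = 1 → c ⬝ᵥ x₀ ≤ K⁻¹ ∧ c ⬝ᵥ x₀ ≤ δ * K⁻¹)
    (hbad : ∀ c y ε, FeasR A b N xhat c y ε → b ⬝ᵥ y < -K⁻¹ →
      min (min (zP A b N xhat K) (zN A b N xhat K)) (zZ A b N xhat K) ≤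
        ENNReal.ofReal (∑ q, |ε q - 1|)) :
    ∀ c y ε, FeasR A b N xhat c y ε →
      min (min (zP A b N xhat K) (zN A b N xhat K)) (zZ A b N xhat K) ≤
        ENNReal.ofReal (∑ q, |ε q - 1|) := by
  intro c y ε hf
  obtain ⟨h1, h2, h3, h4, h5⟩ := hf
  have hkey := key_ineq A b x₀ δ hδ y h2
  rw [h1] at hkey
  have hS0 : (0:ℝ) ≤ ∑ i, y i := Finset.sum_nonneg fun i _ => h2 i
  obtain ⟨hC1, hC2⟩ := hCK c h4
  rcases lt_trichotomy (b ⬝ᵥ y) 0 with hv | hv | hv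
  · by_cases hgood : -K⁻¹ ≤ b ⬝ᵥ y
    · -- map to FeasNg
      set t : ℝ := -(b ⬝ᵥ y) with htdef
      have ht0 : 0 < t := by simp [htdef]; linarith
      have htK : t ≤ K⁻¹ := by simp [htdef]; linarith
      refine le_trans (le_trans (min_le_left _ _) (min_le_right _ _)) (sInf_le ?_)
      refine ⟨t⁻¹ • c, t⁻¹ • y, ε, ⟨?_, ?_, ?_, ?_, ?_⟩, rfl⟩
      · rw [Matrix.mulVec_smul, h1]
      · intro i; exact mul_nonneg (inv_nonneg.mpr ht0.le) (h2 i)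
      · intro q
        rw [smul_dotProduct, h3 q]
        simp only [smul_eq_mul]
        have hbyt : b ⬝ᵥ y = -t := by simp [htdef]
        rw [hbyt]
        field_simp
      · rw [dotProduct_smul]
        simp only [smul_eq_mul]
        have hbyt : b ⬝ᵥ y = -t := by simp [htdef]
        rw [hbyt]
        field_simp
      · rw [hN₂, abs_of_pos (inv_pos.mpr ht0), h4, mul_one]
        have := inv_anti₀ ht0 htK
        rwa [inv_inv] at this
    · exact hbad c y ε ⟨h1, h2, h3, h4, h5⟩ (by linarith [not_le.mp hgood])
  · -- b ⬝ᵥ y = 0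
    have hε := h5 hv
    have hobj : ∑ q, |ε q - 1| = 0 := Finset.sum_eq_zero fun q _ => by simp [hε q]
    rw [hobj]
    refine le_trans (min_le_right _ _) ?_
    have hcne : c ≠ 0 := by
      intro hc
      rw [hc] at h4
      have h0 := hN₂ 0 (0 : Fin n → ℝ)
      simp at h0
      rw [h0] at h4
      norm_num at h4
    have hyne : y ≠ 0 := by
      intro hy
      rw [hy, Matrix.mulVec_zero] at h1
      exact hcne h1.symm
    have hSpos : 0 < ∑ i, y i := by
      rcases hS0.lt_or_eq with h | h
      · exact h
      · exfalso
        apply hyne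
        funext i
        have := (Finset.sum_eq_zero_iff_of_nonneg (fun j _ => h2 j)).mp h.symm i (Finset.mem_univ i)
        simpa using this
    have hSK : ∑ i, y i ≤ K⁻¹ := by
      rw [hv] at hkey
      have : δ * (∑ i, y i) ≤ δ * K⁻¹ := by linarith
      exact le_of_mul_le_mul_left this hδ0
    have h0 : (0:ℝ≥0∞) = ENNReal.ofReal 0 := by simp
    rw [ENNReal.ofReal_zero]
    apply sInf_le
    set S : ℝ := ∑ i, y i with hSdef
    refine ⟨S⁻¹ • c, S⁻¹ • y, ⟨?_, ?_, ?_, ?_, ?_, ?_⟩, rfl⟩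
    · rw [Matrix.mulVec_smul, h1]
    · intro i; exact mul_nonneg (inv_nonneg.mpr hSpos.le) (h2 i)
    · intro q
      rw [smul_dotProduct, h3 q, hv]
      simp
    · rw [dotProduct_smul, hv]; simp
    · simp only [Pi.smul_apply, smul_eq_mul, ← Finset.mul_sum]
      field_simp [← hSdef]; exact hSdef.symm
    · rw [hN₂, abs_of_pos (inv_pos.mpr hSpos), h4, mul_one]
      have := inv_anti₀ hSpos hSK
      rwa [inv_inv] at this
  · -- b ⬝ᵥ y > 0
    set t : ℝ := b ⬝ᵥ y with htdef
    have ht0 : 0 < t := hv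
    have htK : t ≤ K⁻¹ := by
      have : t ≤ c ⬝ᵥ x₀ := by nlinarith
      linarith [hC1]
    refine le_trans (le_trans (min_le_left _ _) (min_le_left _ _)) (sInf_le ?_)
    refine ⟨t⁻¹ • c, t⁻¹ • y, ε, ⟨?_, ?_, ?_, ?_, ?_⟩, rfl⟩
    · rw [Matrix.mulVec_smul, h1]
    · intro i; exact mul_nonneg (inv_nonneg.mpr ht0.le) (h2 i)
    · intro q
      rw [smul_dotProduct, h3 q]
      simp only [smul_eq_mul]
      field_simp
    · rw [dotProduct_smul]
      simp only [smul_eq_mul, ← htdef]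
      field_simp
    · rw [hN₂, abs_of_pos (inv_pos.mpr ht0), h4, mul_one]
      have := inv_anti₀ ht0 htK
      rwa [inv_inv] at this


lemma master {m n Q : ℕ} (A : Matrix (Fin m) (Fin n) ℝ) (b : Fin m → ℝ)
    (N : (Fin n → ℝ) → ℝ) (xhat : Fin Q → Fin n → ℝ) (K : ℝ)
    (hN₂ : ∀ (a : ℝ) (x : Fin n → ℝ), N (a • x) = |a| * N x)
    (hK0 : 0 < K)
    (Hcore : ∀ c y ε, FeasR A b N xhat c y ε →
      min (min (zP A b N xhat K) (zN A b N xhat K)) (zZ A b N xhat K) ≤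
        ENNReal.ofReal (∑ q, |ε q - 1|)) :
    (sInf {v : ℝ≥0∞ | ∃ (c : Fin n → ℝ) (y : Fin m → ℝ) (ε : Fin Q → ℝ),
          FeasR A b N xhat c y ε ∧ v = ENNReal.ofReal (∑ q, |ε q - 1|)} =
        min (min (zP A b N xhat K) (zN A b N xhat K)) (zZ A b N xhat K)) ∧
      ∀ (cstar : Fin n → ℝ) (ystar : Fin m → ℝ) (εstar : Fin Q → ℝ),
        ((FeasP A b N xhat K cstar ystar εstar ∧
            (∀ c y ε, FeasP A b N xhat K c y ε →
              ∑ q, |εstar q - 1| ≤ ∑ q, |ε q - 1|) ∧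
            ENNReal.ofReal (∑ q, |εstar q - 1|) =
              min (min (zP A b N xhat K) (zN A b N xhat K)) (zZ A b N xhat K)) ∨
         (FeasNg A b N xhat K cstar ystar εstar ∧
            (∀ c y ε, FeasNg A b N xhat K c y ε →
              ∑ q, |εstar q - 1| ≤ ∑ q, |ε q - 1|) ∧
            ENNReal.ofReal (∑ q, |εstar q - 1|) =
              min (min (zP A b N xhat K) (zN A b N xhat K)) (zZ A b N xhat K)) ∨
         (FeasZ A b N xhat K cstar ystar ∧ (∀ q, εstar q = 1) ∧
            zZ A b N xhat K =
              min (min (zP A b N xhat K) (zN A b N xhat K)) (zZ A b N xhat K))) →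
        (FeasR A b N xhat ((N cstar)⁻¹ • cstar) ((N cstar)⁻¹ • ystar) εstar ∧
          ∀ c y ε, FeasR A b N xhat c y ε →
            ∑ q, |εstar q - 1| ≤ ∑ q, |ε q - 1|) := by
  constructor
  · apply le_antisymm
    · refine le_min (le_min ?_ ?_) ?_
      · apply sInf_le_sInf
        rintro v ⟨c, y, ε, hf, rfl⟩
        exact ⟨_, _, ε, normP hN₂ hK0 hf, rfl⟩
      · apply sInf_le_sInf
        rintro v ⟨c, y, ε, hf, rfl⟩
        exact ⟨_, _, ε, normN hN₂ hK0 hf, rfl⟩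
      · apply sInf_le_sInf
        rintro v ⟨c, y, hf, rfl⟩
        exact ⟨_, _, fun _ => 1, normZ hN₂ hK0 (fun _ => 1) (fun _ => rfl) hf, by simp⟩
    · apply le_sInf
      rintro v ⟨c, y, ε, hf, rfl⟩
      exact Hcore c y ε hf
  · rintro cstar ystar εstar (⟨hfeas, -, hval⟩ | ⟨hfeas, -, hval⟩ | ⟨hfeas, hεs, -⟩)
    · refine ⟨normP hN₂ hK0 hfeas, fun c y ε hf => ?_⟩
      have h1 := Hcore c y ε hf
      rw [← hval] at h1
      exact (ENNReal.ofReal_le_ofReal_iff (Finset.sum_nonneg fun q _ => abs_nonneg _)).mp h1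
    · refine ⟨normN hN₂ hK0 hfeas, fun c y ε hf => ?_⟩
      have h1 := Hcore c y ε hf
      rw [← hval] at h1
      exact (ENNReal.ofReal_le_ofReal_iff (Finset.sum_nonneg fun q _ => abs_nonneg _)).mp h1
    · refine ⟨normZ hN₂ hK0 εstar hεs hfeas, fun c y ε hf => ?_⟩
      calc ∑ q, |εstar q - 1| = 0 := Finset.sum_eq_zero fun q _ => by simp [hεs q]
        _ ≤ ∑ q, |ε q - 1| := Finset.sum_nonneg fun q _ => abs_nonneg _


lemma dot_abs_le {n : ℕ} (c v : Fin n → ℝ) : |c ⬝ᵥ v| ≤ ‖c‖ * ∑ j, |v j| := by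
  calc |c ⬝ᵥ v| ≤ ∑ j, |c j * v j| := Finset.abs_sum_le_sum_abs _ _
    _ ≤ ∑ j, ‖c‖ * |v j| := by
        apply Finset.sum_le_sum
        intro j _
        rw [abs_mul]
        exact mul_le_mul_of_nonneg_right (by simpa using norm_le_pi_norm c j) (abs_nonneg _)
    _ = ‖c‖ * ∑ j, |v j| := by rw [Finset.mul_sum]

lemma dot_sum_swap {n Q : ℕ} (c : Fin n → ℝ) (xhat : Fin Q → Fin n → ℝ) :
    (∑ q, c ⬝ᵥ xhat q) = c ⬝ᵥ (fun j => ∑ q, xhat q j) := by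
  simp only [dotProduct, Finset.mul_sum]
  rw [Finset.sum_comm]



set_option maxHeartbeats 2000000 in
theorem stmt_8
    (m n Q : ℕ) (hm : 0 < m) (hn : 0 < n) (hQ : 0 < Q)
    (A : Matrix (Fin m) (Fin n) ℝ) (b : Fin m → ℝ) (hb : b ≠ 0)
    (hrows : ∀ i, A i ≠ 0)
    (hPint : (interior {x : Fin n → ℝ | ∀ i, b i ≤ A.mulVec x i}).Nonempty)
    -- the normalization norm ‖·‖'
    (N : (Fin n → ℝ) → ℝ)
    (hN₁ : ∀ x y, N (x + y) ≤ N x + N y)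
    (hN₂ : ∀ (a : ℝ) (x : Fin n → ℝ), N (a • x) = |a| * N x)
    (hN₃ : ∀ x, x ≠ 0 → 0 < N x)
    -- the data set X̂
    (xhat : Fin Q → Fin n → ℝ) :
    ∃ K : ℝ, 0 < K ∧
      -- the optimal value of GIO_R(X̂) equals min{z⁺, z⁻, z⁰}
      sInf {v : ℝ≥0∞ | ∃ (c : Fin n → ℝ) (y : Fin m → ℝ) (ε : Fin Q → ℝ),
          FeasR A b N xhat c y ε ∧ v = ENNReal.ofReal (∑ q, |ε q - 1|)} =
        min (min (zP A b N xhat K) (zN A b N xhat K)) (zZ A b N xhat K) ∧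
      -- any optimal solution of a sub-problem attaining this minimum, once
      -- normalized, is an optimal solution of GIO_R(X̂)
      ∀ (cstar : Fin n → ℝ) (ystar : Fin m → ℝ) (εstar : Fin Q → ℝ),
        ((FeasP A b N xhat K cstar ystar εstar ∧
            (∀ c y ε, FeasP A b N xhat K c y ε →
              ∑ q, |εstar q - 1| ≤ ∑ q, |ε q - 1|) ∧
            ENNReal.ofReal (∑ q, |εstar q - 1|) =
              min (min (zP A b N xhat K) (zN A b N xhat K)) (zZ A b N xhat K)) ∨
         (FeasNg A b N xhat K cstar ystar εstar ∧
            (∀ c y ε, FeasNg A b N xhat K c y ε →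
              ∑ q, |εstar q - 1| ≤ ∑ q, |ε q - 1|) ∧
            ENNReal.ofReal (∑ q, |εstar q - 1|) =
              min (min (zP A b N xhat K) (zN A b N xhat K)) (zZ A b N xhat K)) ∨
         (FeasZ A b N xhat K cstar ystar ∧ (∀ q, εstar q = 1) ∧
            zZ A b N xhat K =
              min (min (zP A b N xhat K) (zN A b N xhat K)) (zZ A b N xhat K))) →
        (FeasR A b N xhat ((N cstar)⁻¹ • cstar) ((N cstar)⁻¹ • ystar) εstar ∧
          ∀ c y ε, FeasR A b N xhat c y ε →
            ∑ q, |εstar q - 1| ≤ ∑ q, |ε q - 1|) := by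

  classical
  obtain ⟨α, hα0, hα⟩ := exists_alpha N hn hN₁ hN₂ hN₃
  obtain ⟨x₀, δ, hδ0, hδ⟩ := exists_slack hm A b hrows hPint
  set B₀ : ℝ := ∑ j, |x₀ j| with hB₀
  clear_value B₀
  have hB₀0 : 0 ≤ B₀ := by rw [hB₀]; exact Finset.sum_nonneg fun j _ => abs_nonneg _
  set Cα : ℝ := α⁻¹ * B₀ + 1 with hCαdef
  clear_value Cα
  have hCα0 : 0 < Cα := by
    rw [hCαdef]
    have : 0 ≤ α⁻¹ * B₀ := mul_nonneg (inv_nonneg.mpr hα0.le) hB₀0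
    linarith
  have hnorm1 : ∀ c : Fin n → ℝ, N c = 1 → ‖c‖ ≤ α⁻¹ := by
    intro c hc
    have := hα c
    rw [hc] at this
    rw [← one_div]
    rw [le_div_iff₀ hα0]
    linarith [this]
  have hx₀C : ∀ c : Fin n → ℝ, N c = 1 → c ⬝ᵥ x₀ ≤ Cα := by
    intro c hc
    have h1 : |c ⬝ᵥ x₀| ≤ ‖c‖ * B₀ := by rw [hB₀]; exact dot_abs_le c x₀
    have h2 : ‖c‖ * B₀ ≤ α⁻¹ * B₀ := mul_le_mul_of_nonneg_right (hnorm1 c hc) hB₀0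
    calc c ⬝ᵥ x₀ ≤ |c ⬝ᵥ x₀| := le_abs_self _
      _ ≤ α⁻¹ * B₀ := h1.trans h2
      _ ≤ Cα := by rw [hCαdef]; linarith
  set W : ℝ := α⁻¹ * (∑ j, |∑ q, xhat q j|) + 1 with hWdef
  clear_value W
  have hW0 : 0 < W := by
    rw [hWdef]
    have h1 : (0:ℝ) ≤ ∑ j, |∑ q, xhat q j| := Finset.sum_nonneg fun j _ => abs_nonneg _
    have : 0 ≤ α⁻¹ * ∑ j, |∑ q, xhat q j| := mul_nonneg (inv_nonneg.mpr hα0.le) h1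
    linarith
  have hWb : ∀ c : Fin n → ℝ, N c = 1 → |∑ q, c ⬝ᵥ xhat q| ≤ W := by
    intro c hc
    rw [dot_sum_swap]
    calc |c ⬝ᵥ fun j => ∑ q, xhat q j| ≤ ‖c‖ * ∑ j, |∑ q, xhat q j| := dot_abs_le _ _
      _ ≤ α⁻¹ * ∑ j, |∑ q, xhat q j| := mul_le_mul_of_nonneg_right (hnorm1 c hc)
          (Finset.sum_nonneg fun j _ => abs_nonneg _)
      _ ≤ W := by rw [hWdef]; linarith
  by_cases hray : ∃ y : Fin m → ℝ, (∀ i, 0 ≤ y i) ∧ Aᵀ.mulVec y = 0 ∧ y ≠ 0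
  · -- ray exists
    obtain ⟨r₀, hr₀0, hr₀A, hr₀ne⟩ := hray
    have hr₀S : 0 < ∑ i, r₀ i := by
      rcases (Finset.sum_nonneg (s := Finset.univ) fun i _ => hr₀0 i).lt_or_eq with h | h
      · exact h
      · exfalso
        apply hr₀ne
        funext i
        have := (Finset.sum_eq_zero_iff_of_nonneg (fun j _ => hr₀0 j)).mp h.symm i
          (Finset.mem_univ i)
        simpa using this
    have hbr₀ : b ⬝ᵥ r₀ < 0 := by
      have hkey := key_ineq A b x₀ δ hδ r₀ hr₀0
      rw [hr₀A] at hkey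
      simp only [zero_dotProduct] at hkey
      nlinarith
    set r : Fin m → ℝ := (-(b ⬝ᵥ r₀))⁻¹ • r₀ with hrdef
    have hr0 : ∀ i, 0 ≤ r i := fun i =>
      mul_nonneg (inv_nonneg.mpr (by linarith)) (hr₀0 i)
    have hrA : Aᵀ.mulVec r = 0 := by
      rw [hrdef, Matrix.mulVec_smul, hr₀A, smul_zero]
    have hrb : b ⬝ᵥ r = -1 := by
      rw [hrdef, dotProduct_smul]
      simp only [smul_eq_mul]
      field_simp
      rw [div_self hbr₀.ne]
    by_cases hneg : ∃ y₁ : Fin m → ℝ, (∀ i, 0 ≤ y₁ i) ∧ (∑ q, (Aᵀ.mulVec y₁) ⬝ᵥ xhat q) < 0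
    · -- there is a dual direction with negative data sum
      obtain ⟨y₁, hy₁0, hy₁neg⟩ := hneg
      set c₀ : Fin n → ℝ := Aᵀ.mulVec y₁ with hc₀def
      set ρ : ℝ := -(∑ q, c₀ ⬝ᵥ xhat q) with hρdef
      clear_value ρ
      have hρ0 : 0 < ρ := by rw [hρdef]; linarith
      have hc₀ne : c₀ ≠ 0 := by
        intro h
        rw [h] at hy₁neg
        simp only [zero_dotProduct, Finset.sum_const_zero] at hy₁neg
        exact lt_irrefl 0 hy₁neg
      have hNc₀ : 0 < N c₀ := hN₃ c₀ hc₀ne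
      set D : ℝ := 1 + ∑ q, |c₀ ⬝ᵥ xhat q| with hDdef
      clear_value D
      have hD0 : 0 < D := by
        rw [hDdef]
        have : (0:ℝ) ≤ ∑ q, |c₀ ⬝ᵥ xhat q| := Finset.sum_nonneg fun q _ => abs_nonneg _
        linarith
      set E : ℝ := 1 + |b ⬝ᵥ y₁| with hEdef
      clear_value E
      have hE0 : 0 < E := by rw [hEdef]; positivity
      set τ : ℝ := min D⁻¹ E⁻¹ with hτdef
      clear_value τ
      have hτ0 : 0 < τ := by rw [hτdef]; exact lt_min (inv_pos.mpr hD0) (inv_pos.mpr hE0)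
      have hτD : τ ≤ D⁻¹ := by rw [hτdef]; exact min_le_left _ _
      have hτE : τ ≤ E⁻¹ := by rw [hτdef]; exact min_le_right _ _
      have hpad : 0 ≤ 1 + τ * (b ⬝ᵥ y₁) := by
        have h1 : τ * |b ⬝ᵥ y₁| ≤ E⁻¹ * E := by
          apply mul_le_mul hτE (by rw [hEdef]; linarith) (abs_nonneg _)
            (inv_pos.mpr hE0).le
        rw [inv_mul_cancel₀ hE0.ne'] at h1
        have h2 : -(τ * |b ⬝ᵥ y₁|) ≤ τ * (b ⬝ᵥ y₁) := by
          rw [← mul_neg]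
          exact mul_le_mul_of_nonneg_left (neg_abs_le _) hτ0.le
        linarith
      have hexact : ∀ q, τ * |c₀ ⬝ᵥ xhat q| ≤ 1 := by
        intro q
        have h1 : |c₀ ⬝ᵥ xhat q| ≤ D := by
          rw [hDdef]
          have := Finset.single_le_sum (f := fun q => |c₀ ⬝ᵥ xhat q|)
            (fun q _ => abs_nonneg _) (Finset.mem_univ q)
          linarith
        calc τ * |c₀ ⬝ᵥ xhat q| ≤ D⁻¹ * D :=
              mul_le_mul hτD h1 (abs_nonneg _) (inv_pos.mpr hD0).le
          _ = 1 := inv_mul_cancel₀ hD0.ne'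
      set K : ℝ := min (min Cα⁻¹ (δ / Cα)) (min (τ * N c₀) (τ * ρ / W)) with hKdef
      clear_value K
      have hK0 : 0 < K := by
        rw [hKdef]
        apply lt_min (lt_min (inv_pos.mpr hCα0) (div_pos hδ0 hCα0))
        exact lt_min (mul_pos hτ0 hNc₀) (div_pos (mul_pos hτ0 hρ0) hW0)
      have hKa : K ≤ Cα⁻¹ := by rw [hKdef]; exact le_trans (min_le_left _ _) (min_le_left _ _)
      have hKb : K ≤ δ / Cα := by rw [hKdef]; exact le_trans (min_le_left _ _) (min_le_right _ _)
      have hKN : K ≤ τ * N c₀ := by rw [hKdef]; exact le_trans (min_le_right _ _) (min_le_left _ _)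
      have hKρ : K * W ≤ τ * ρ := by
        have h1 : K ≤ τ * ρ / W := by
          rw [hKdef]; exact le_trans (min_le_right _ _) (min_le_right _ _)
        calc K * W ≤ (τ * ρ / W) * W := mul_le_mul_of_nonneg_right h1 hW0.le
          _ = τ * ρ := by field_simp
      have hbad : ∀ c y ε, FeasR A b N xhat c y ε → b ⬝ᵥ y < -K⁻¹ →
          min (min (zP A b N xhat K) (zN A b N xhat K)) (zZ A b N xhat K) ≤
            ENNReal.ofReal (∑ q, |ε q - 1|) := by
        intro c y ε hf hlt
        obtain ⟨h1, h2, h3, h4, h5⟩ := hf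
        have hKinv : 0 < K⁻¹ := inv_pos.mpr hK0
        have hv : b ⬝ᵥ y < 0 := by linarith
        set Sg : ℝ := ∑ q, ε q with hSgdef
        clear_value Sg
        have hTv : (∑ q, c ⬝ᵥ xhat q) = Sg * (b ⬝ᵥ y) := by
          rw [hSgdef, Finset.sum_mul]
          exact Finset.sum_congr rfl fun q _ => h3 q
        have hTW : |∑ q, c ⬝ᵥ xhat q| ≤ W := hWb c h4
        have hSgb : Sg ≤ W * K := by
          rcases le_or_gt Sg 0 with h | h
          · nlinarith [mul_pos hW0 hK0]
          · have e1 : Sg * K⁻¹ ≤ Sg * (-(b ⬝ᵥ y)) :=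
              mul_le_mul_of_nonneg_left (by linarith) h.le
            have e2 : Sg * (-(b ⬝ᵥ y)) = -(∑ q, c ⬝ᵥ xhat q) := by rw [hTv]; ring
            have e3 : -(∑ q, c ⬝ᵥ xhat q) ≤ W := (neg_le_abs _).trans hTW
            have e4 : Sg * K⁻¹ ≤ W := by
              rw [e2] at e1
              exact e1.trans e3
            calc Sg = (Sg * K⁻¹) * K := by field_simp
              _ ≤ W * K := mul_le_mul_of_nonneg_right e4 hK0.le
        have hobj : (Q : ℝ) - Sg ≤ ∑ q, |ε q - 1| := by rw [hSgdef]; exact obj_lower ε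
        have hpadLHS : (∑ q, (1 + τ * (c₀ ⬝ᵥ xhat q))) = (Q : ℝ) - τ * ρ := by
          rw [Finset.sum_add_distrib, Finset.sum_const, Finset.card_univ, Fintype.card_fin,
            ← Finset.mul_sum, hρdef]
          simp only [nsmul_eq_mul, mul_one, mul_neg, sub_neg_eq_add]
        have hchain : (∑ q, (1 + τ * (c₀ ⬝ᵥ xhat q))) ≤ ∑ q, |ε q - 1| := by
          rw [hpadLHS]
          have : W * K ≤ τ * ρ := by linarith [hKρ]
          linarith
        refine le_trans (le_trans (min_le_left _ _) (min_le_right _ _)) ?_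
        calc zN A b N xhat K ≤ ENNReal.ofReal (∑ q, (1 + τ * (c₀ ⬝ᵥ xhat q))) :=
              zN_le_pad A b N xhat K hN₂ r hr0 hrA hrb y₁ hy₁0 τ hτ0 hpad
                (by rw [← hc₀def]; exact hKN) (by rw [← hc₀def]; exact hexact)
          _ ≤ ENNReal.ofReal (∑ q, |ε q - 1|) := ENNReal.ofReal_le_ofReal hchain
      have hCK := hCK_gen x₀ N K Cα δ hK0 hCα0 hδ0 hKa hKb hx₀C
      exact ⟨K, hK0, master A b N xhat K hN₂ hK0
        (core_cases A b N xhat K hN₂ hK0 x₀ δ hδ0 hδ hCK hbad)⟩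
    · -- all dual directions have nonnegative data sum
      push_neg at hneg
      obtain ⟨i₀, hi₀⟩ : ∃ i, r i ≠ 0 := by
        by_contra h
        push_neg at h
        have : r = 0 := funext fun i => h i
        rw [this] at hrb
        simp at hrb
      have hri₀ : 0 < r i₀ := (hr0 i₀).lt_of_ne (Ne.symm hi₀)
      set a : Fin n → ℝ := Aᵀ.mulVec (Pi.single i₀ 1) with hadef
      have hane : a ≠ 0 := by
        have ha_eq : a = A i₀ := by
          funext j
          rw [hadef]
          simp [Matrix.mulVec, dotProduct, Pi.single_apply, Matrix.transpose_apply]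
        rw [ha_eq]
        exact hrows i₀
      have hNa : 0 < N a := hN₃ a hane
      -- the reversed direction
      set yneg : Fin m → ℝ := (r i₀)⁻¹ • r - Pi.single i₀ 1 with hynegdef
      have hyneg0 : ∀ i, 0 ≤ yneg i := by
        intro i
        rw [hynegdef]
        simp only [Pi.sub_apply, Pi.smul_apply, smul_eq_mul]
        rcases eq_or_ne i i₀ with rfl | h
        · rw [Pi.single_eq_same, inv_mul_cancel₀ hri₀.ne']
          norm_num
        · rw [Pi.single_eq_of_ne h]
          have := mul_nonneg (inv_nonneg.mpr hri₀.le) (hr0 i)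
          linarith
      have hAyneg : Aᵀ.mulVec yneg = -a := by
        rw [hynegdef, Matrix.mulVec_sub, Matrix.mulVec_smul, hrA, smul_zero, ← hadef]
        simp
      have hsza : (∑ q, a ⬝ᵥ xhat q) = 0 := by
        have hpos := hneg (Pi.single i₀ 1) (fun i => by
          rcases eq_or_ne i i₀ with rfl | h
          · rw [Pi.single_eq_same]; norm_num
          · rw [Pi.single_eq_of_ne h])
        rw [← hadef] at hpos
        have hneg2 := hneg yneg hyneg0
        rw [hAyneg] at hneg2
        simp only [neg_dotProduct, Finset.sum_neg_distrib] at hneg2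
        linarith
      set D : ℝ := 1 + ∑ q, |a ⬝ᵥ xhat q| with hDdef
      clear_value D
      have hD0 : 0 < D := by
        rw [hDdef]
        have : (0:ℝ) ≤ ∑ q, |a ⬝ᵥ xhat q| := Finset.sum_nonneg fun q _ => abs_nonneg _
        linarith
      set E : ℝ := 1 + |b ⬝ᵥ Pi.single i₀ 1| with hEdef
      clear_value E
      have hE0 : 0 < E := by rw [hEdef]; positivity
      set τ : ℝ := min D⁻¹ E⁻¹ with hτdef
      clear_value τ
      have hτ0 : 0 < τ := by rw [hτdef]; exact lt_min (inv_pos.mpr hD0) (inv_pos.mpr hE0)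
      have hτD : τ ≤ D⁻¹ := by rw [hτdef]; exact min_le_left _ _
      have hτE : τ ≤ E⁻¹ := by rw [hτdef]; exact min_le_right _ _
      have hpad : 0 ≤ 1 + τ * (b ⬝ᵥ Pi.single i₀ 1) := by
        have h1 : τ * |b ⬝ᵥ Pi.single i₀ 1| ≤ E⁻¹ * E := by
          apply mul_le_mul hτE (by rw [hEdef]; linarith) (abs_nonneg _)
            (inv_pos.mpr hE0).le
        rw [inv_mul_cancel₀ hE0.ne'] at h1
        have h2 : -(τ * |b ⬝ᵥ Pi.single i₀ 1|) ≤ τ * (b ⬝ᵥ Pi.single i₀ 1) := by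
          rw [← mul_neg]
          exact mul_le_mul_of_nonneg_left (neg_abs_le _) hτ0.le
        linarith
      have hexact : ∀ q, τ * |a ⬝ᵥ xhat q| ≤ 1 := by
        intro q
        have h1 : |a ⬝ᵥ xhat q| ≤ D := by
          rw [hDdef]
          have := Finset.single_le_sum (f := fun q => |a ⬝ᵥ xhat q|)
            (fun q _ => abs_nonneg _) (Finset.mem_univ q)
          linarith
        calc τ * |a ⬝ᵥ xhat q| ≤ D⁻¹ * D :=
              mul_le_mul hτD h1 (abs_nonneg _) (inv_pos.mpr hD0).le
          _ = 1 := inv_mul_cancel₀ hD0.ne'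
      set K : ℝ := min (min Cα⁻¹ (δ / Cα)) (τ * N a) with hKdef
      clear_value K
      have hK0 : 0 < K := by
        rw [hKdef]
        exact lt_min (lt_min (inv_pos.mpr hCα0) (div_pos hδ0 hCα0)) (mul_pos hτ0 hNa)
      have hKa : K ≤ Cα⁻¹ := by rw [hKdef]; exact le_trans (min_le_left _ _) (min_le_left _ _)
      have hKb : K ≤ δ / Cα := by rw [hKdef]; exact le_trans (min_le_left _ _) (min_le_right _ _)
      have hKN : K ≤ τ * N a := by rw [hKdef]; exact min_le_right _ _
      have hbad : ∀ c y ε, FeasR A b N xhat c y ε → b ⬝ᵥ y < -K⁻¹ →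
          min (min (zP A b N xhat K) (zN A b N xhat K)) (zZ A b N xhat K) ≤
            ENNReal.ofReal (∑ q, |ε q - 1|) := by
        intro c y ε hf hlt
        obtain ⟨h1, h2, h3, h4, h5⟩ := hf
        have hKinv : 0 < K⁻¹ := inv_pos.mpr hK0
        have hv : b ⬝ᵥ y < 0 := by linarith
        set Sg : ℝ := ∑ q, ε q with hSgdef
        clear_value Sg
        have hTv : (∑ q, c ⬝ᵥ xhat q) = Sg * (b ⬝ᵥ y) := by
          rw [hSgdef, Finset.sum_mul]
          exact Finset.sum_congr rfl fun q _ => h3 q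
        have hT0 : 0 ≤ ∑ q, c ⬝ᵥ xhat q := by
          have := hneg y h2
          rw [h1] at this
          exact this
        have hSg0 : Sg ≤ 0 := by nlinarith
        have hobj : (Q : ℝ) - Sg ≤ ∑ q, |ε q - 1| := by rw [hSgdef]; exact obj_lower ε
        have hpadLHS : (∑ q, (1 + τ * (a ⬝ᵥ xhat q))) = (Q : ℝ) := by
          rw [Finset.sum_add_distrib, Finset.sum_const, Finset.card_univ, Fintype.card_fin,
            ← Finset.mul_sum, hsza]
          simp [nsmul_eq_mul]
        have hchain : (∑ q, (1 + τ * (a ⬝ᵥ xhat q))) ≤ ∑ q, |ε q - 1| := by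
          rw [hpadLHS]
          linarith
        refine le_trans (le_trans (min_le_left _ _) (min_le_right _ _)) ?_
        calc zN A b N xhat K ≤ ENNReal.ofReal (∑ q, (1 + τ * (a ⬝ᵥ xhat q))) :=
              zN_le_pad A b N xhat K hN₂ r hr0 hrA hrb (Pi.single i₀ 1)
                (fun i => by
                  rcases eq_or_ne i i₀ with rfl | h
                  · rw [Pi.single_eq_same]; norm_num
                  · rw [Pi.single_eq_of_ne h]) τ hτ0 hpad
                (by rw [← hadef]; exact hKN) (by rw [← hadef]; exact hexact)
          _ ≤ ENNReal.ofReal (∑ q, |ε q - 1|) := ENNReal.ofReal_le_ofReal hchain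
      have hCK := hCK_gen x₀ N K Cα δ hK0 hCα0 hδ0 hKa hKb hx₀C
      exact ⟨K, hK0, master A b N xhat K hN₂ hK0
        (core_cases A b N xhat K hN₂ hK0 x₀ δ hδ0 hδ hCK hbad)⟩
  · -- no ray: dual cone is pointed
    push_neg at hray
    have hnoray : ∀ y : Fin m → ℝ, (∀ i, 0 ≤ y i) → Aᵀ.mulVec y = 0 → y = 0 :=
      fun y hy hAy => hray y hy hAy
    obtain ⟨μ, hμ0, hμ⟩ := exists_mu hm A N (N_continuous N hN₁ hN₂) hN₂ hN₃ hnoray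
    set β : ℝ := 1 + ∑ i, |b i| with hβdef
    clear_value β
    have hβ0 : 0 < β := by rw [hβdef]; positivity
    set K : ℝ := min (min Cα⁻¹ (δ / Cα)) (μ / β) with hKdef
    clear_value K
    have hK0 : 0 < K := by
      rw [hKdef]
      exact lt_min (lt_min (inv_pos.mpr hCα0) (div_pos hδ0 hCα0)) (div_pos hμ0 hβ0)
    have hKa : K ≤ Cα⁻¹ := by rw [hKdef]; exact le_trans (min_le_left _ _) (min_le_left _ _)
    have hKb : K ≤ δ / Cα := by rw [hKdef]; exact le_trans (min_le_left _ _) (min_le_right _ _)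
    have hKc : K ≤ μ / β := by rw [hKdef]; exact min_le_right _ _
    have hbad : ∀ c y ε, FeasR A b N xhat c y ε → b ⬝ᵥ y < -K⁻¹ →
        min (min (zP A b N xhat K) (zN A b N xhat K)) (zZ A b N xhat K) ≤
          ENNReal.ofReal (∑ q, |ε q - 1|) := by
      intro c y ε hf hlt
      exfalso
      obtain ⟨h1, h2, h3, h4, h5⟩ := hf
      have hS : μ * ∑ i, y i ≤ 1 := by
        have := hμ y h2
        rw [h1, h4] at this
        exact this
      have habs : -(b ⬝ᵥ y) ≤ β * ∑ i, y i := by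
        have e1 : -(b ⬝ᵥ y) ≤ |b ⬝ᵥ y| := neg_le_abs _
        have e2 : |b ⬝ᵥ y| ≤ ∑ i, |b i| * y i := by
          calc |b ⬝ᵥ y| ≤ ∑ i, |b i * y i| := Finset.abs_sum_le_sum_abs _ _
            _ = ∑ i, |b i| * y i := Finset.sum_congr rfl fun i _ => by
                rw [abs_mul, abs_of_nonneg (h2 i)]
        have e3 : ∑ i, |b i| * y i ≤ ∑ i, β * y i := Finset.sum_le_sum fun i _ => by
          have : |b i| ≤ β := by
            rw [hβdef]
            have := Finset.single_le_sum (f := fun i => |b i|)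
              (fun i _ => abs_nonneg _) (Finset.mem_univ i)
            linarith
          exact mul_le_mul_of_nonneg_right this (h2 i)
        rw [← Finset.mul_sum] at e3
        linarith
      have hβμ : β * ∑ i, y i ≤ β / μ := by
        rw [div_eq_mul_inv]
        have hSle : ∑ i, y i ≤ μ⁻¹ := by
          rw [← one_div, le_div_iff₀ hμ0]
          linarith [hS]
        exact mul_le_mul_of_nonneg_left hSle hβ0.le
      have hKinv : β / μ ≤ K⁻¹ := by
        have := inv_anti₀ hK0 hKc
        rwa [inv_div] at this
      linarith
    have hCK := hCK_gen x₀ N K Cα δ hK0 hCα0 hδ0 hKa hKb hx₀C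
    exact ⟨K, hK0, master A b N xhat K hN₂ hK0
      (core_cases A b N xhat K hN₂ hK0 x₀ δ hδ0 hδ hCK hbad)⟩
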